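/- Let φ be a Bernstein function of class B_N, extended to Re z ≥ 0 by φ(z) = m + σ²·z + ∫₀^∞ (1 − e^{−z y}) Π̄(y) dy. Then for all a > 0 and b > 0: Im φ(b a + i b) = σ² b + ∫₀^∞ sin(b y) e^{−b a y} Π̄(y) dy ≥ 0, and σ² b + (e^{−π a} − e^{−2π a}) ∫₀^{π/b} sin(b y) Π̄(y) dy ≤ Im φ(b a + i b) ≤ σ² b + b ∫₀^{π/b} y Π̄(y) dy. (Paper: Lemma 'lemma:WandPhi'.) -/

import Mathlib

open MeasureTheory Set

private lemma iUnion_Ioc_step_eq_Ioi {c T : ℝ} (hT : 0 < T) :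
    (⋃ j : ℕ, Set.Ioc (c + (j : ℝ) * T) (c + ((j : ℝ) + 1) * T)) = Set.Ioi c := by
  ext x
  simp only [Set.mem_iUnion, Set.mem_Ioc, Set.mem_Ioi]
  constructor
  · rintro ⟨j, h1, -⟩
    have : (0 : ℝ) ≤ (j : ℝ) * T := by positivity
    linarith
  · intro hx
    have h0 : 0 < (x - c) / T := div_pos (by linarith) hT
    have hk1 : 0 < ⌈(x - c) / T⌉₊ := Nat.ceil_pos.2 h0
    refine ⟨⌈(x - c) / T⌉₊ - 1, ?_, ?_⟩
    · have hlt : ((⌈(x - c) / T⌉₊ - 1 : ℕ) : ℝ) < (x - c) / T := by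
        rw [← Nat.lt_ceil]; omega
      have h2 := (lt_div_iff₀ hT).1 hlt
      linarith
    · have hle : (x - c) / T ≤ ((⌈(x - c) / T⌉₊ : ℕ) : ℝ) := Nat.le_ceil _
      have hcast : ((⌈(x - c) / T⌉₊ - 1 : ℕ) : ℝ) + 1 = (⌈(x - c) / T⌉₊ : ℝ) := by
        push_cast [Nat.cast_sub hk1]; ring
      rw [hcast]
      have := (div_le_iff₀ hT).1 hle
      linarith

private lemma hasSum_Ioc_step {f : ℝ → ℝ} {c T : ℝ} (hT : 0 < T)
    (hf : IntegrableOn f (Set.Ioi c)) :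
    HasSum (fun j : ℕ => ∫ y in Set.Ioc (c + (j : ℝ) * T) (c + ((j : ℝ) + 1) * T), f y)
      (∫ y in Set.Ioi c, f y) := by
  rw [← iUnion_Ioc_step_eq_Ioi (c := c) hT]
  refine hasSum_integral_iUnion (fun j => measurableSet_Ioc) ?_ ?_
  · intro i j hij
    simp only [Function.onFun]
    rw [Set.Ioc_disjoint_Ioc]
    rcases hij.lt_or_gt with h | h
    · refine le_trans (min_le_left _ _) (le_trans ?_ (le_max_right _ _))
      have : ((i : ℝ) + 1) ≤ (j : ℝ) := by exact_mod_cast h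
      nlinarith
    · refine le_trans (min_le_right _ _) (le_trans ?_ (le_max_left _ _))
      have : ((j : ℝ) + 1) ≤ (i : ℝ) := by exact_mod_cast h
      nlinarith
  · rw [iUnion_Ioc_step_eq_Ioi (c := c) hT]; exact hf

private lemma hasSum_pair_nonneg {g : ℕ → ℝ} {S : ℝ} (hs : HasSum g S)
    (hpair : ∀ j : ℕ, 0 ≤ g (2 * j) + g (2 * j + 1)) : 0 ≤ S := by
  have hsum := hs.summable
  have he : Summable fun k => g (2 * k) :=
    hsum.comp_injective (fun i j h => by omega)
  have ho : Summable fun k => g (2 * k + 1) :=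
    hsum.comp_injective (fun i j h => by omega)
  rw [← hs.tsum_eq, ← tsum_even_add_odd he ho, ← Summable.tsum_add he ho]
  exact tsum_nonneg hpair

private lemma pair_integral {f : ℝ → ℝ} {T c : ℝ} (hT : 0 < T) (hc : 0 ≤ c)
    (hf : IntegrableOn f (Set.Ioi 0)) :
    (∫ y in Set.Ioc c (c + T), f y) + (∫ y in Set.Ioc (c + T) (c + 2 * T), f y)
      = ∫ y in Set.Ioc c (c + T), (f y + f (y + T)) := by
  have hsub1 : Set.Ioc c (c + T) ⊆ Set.Ioi 0 := fun x hx => lt_of_le_of_lt hc hx.1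
  have hsub2 : Set.Ioc (c + T) (c + 2 * T) ⊆ Set.Ioi 0 := fun x hx => by
    have := hx.1; simp only [Set.mem_Ioi]; linarith
  have h1 : IntervalIntegrable f volume c (c + T) :=
    (intervalIntegrable_iff_integrableOn_Ioc_of_le (by linarith)).2 (hf.mono_set hsub1)
  have h2 : IntervalIntegrable f volume (c + T) (c + 2 * T) :=
    (intervalIntegrable_iff_integrableOn_Ioc_of_le (by linarith)).2 (hf.mono_set hsub2)
  have h3 : IntervalIntegrable (fun y => f (y + T)) volume c (c + T) := by
    have := h2.comp_add_right T
    have e1 : c + T - T = c := by ring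
    have e2 : c + 2 * T - T = c + T := by ring
    rwa [e1, e2] at this
  have e3 : ∫ y in Set.Ioc (c + T) (c + 2 * T), f y = ∫ y in c..(c + T), f (y + T) := by
    rw [intervalIntegral.integral_comp_add_right f T,
      intervalIntegral.integral_of_le (by linarith : c + T ≤ c + T + T)]
    have : c + T + T = c + 2 * T := by ring
    rw [this]
  rw [← intervalIntegral.integral_of_le (by linarith : c ≤ c + T), e3,
    ← intervalIntegral.integral_add h1 h3,
    intervalIntegral.integral_of_le (by linarith : c ≤ c + T)]

private lemma min_bound {b y : ℝ} (hy : 0 < y) :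
    min 1 (b * y) ≤ max 1 b * min 1 y := by
  rcases le_total y 1 with h | h
  · rw [min_eq_right h]
    calc min 1 (b * y) ≤ b * y := min_le_right _ _
    _ ≤ max 1 b * y := by nlinarith [le_max_right 1 b]
  · rw [min_eq_left h, mul_one]
    calc min 1 (b * y) ≤ 1 := min_le_left _ _
    _ ≤ max 1 b := le_max_left _ _

set_option maxHeartbeats 2000000 in
/-- formula and two-sided bounds for the imaginary part
`Im φ(ba + ib)` of a `B_N` Bernstein function (Lemma `lemma:WandPhi`). -/
theorem bernstein_BN_imaginary_part_bounds
    (φC : ℂ → ℂ) (Pib : ℝ → ℝ) (m σ2 : ℝ)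
    (hm : 0 ≤ m) (hσ : 0 ≤ σ2)
    (hPib_nonneg : ∀ y : ℝ, 0 < y → 0 ≤ Pib y)
    (hPib_anti : ∀ x y : ℝ, 0 < x → x ≤ y → Pib y ≤ Pib x)
    (hPib_int : IntegrableOn (fun y : ℝ => min 1 y * Pib y) (Set.Ioi 0))
    (hrepC : ∀ z : ℂ, 0 ≤ z.re →
      φC z = (m : ℂ) + (σ2 : ℂ) * z
        + ∫ y in Set.Ioi (0:ℝ), (1 - Complex.exp (-(z * (y : ℂ)))) * (Pib y : ℂ)) :
    ∀ a b : ℝ, 0 < a → 0 < b →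
      (φC (((b * a : ℝ) : ℂ) + (b : ℂ) * Complex.I)).im
          = σ2 * b + ∫ y in Set.Ioi (0:ℝ), Real.sin (b * y) * Real.exp (-(b * a * y)) * Pib y
      ∧ 0 ≤ (φC (((b * a : ℝ) : ℂ) + (b : ℂ) * Complex.I)).im
      ∧ σ2 * b + (Real.exp (-(Real.pi * a)) - Real.exp (-(2 * Real.pi * a)))
            * (∫ y in Set.Ioc (0:ℝ) (Real.pi / b), Real.sin (b * y) * Pib y)
          ≤ (φC (((b * a : ℝ) : ℂ) + (b : ℂ) * Complex.I)).im
      ∧ (φC (((b * a : ℝ) : ℂ) + (b : ℂ) * Complex.I)).im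
          ≤ σ2 * b + b * ∫ y in Set.Ioc (0:ℝ) (Real.pi / b), y * Pib y := by
  intro a b ha hb
  set z : ℂ := ((b * a : ℝ) : ℂ) + (b : ℂ) * Complex.I with hzdef
  have hzre : z.re = b * a := by simp [hzdef]
  have hzim : z.im = b := by simp [hzdef]
  set T : ℝ := Real.pi / b with hTdef
  have hTpos : 0 < T := div_pos Real.pi_pos hb
  have hbT : b * T = Real.pi := by rw [hTdef, mul_div_assoc', mul_div_cancel_left₀ _ hb.ne']
  -- measurability of Pib on (0, ∞)
  have hmeas : AEStronglyMeasurable Pib (volume.restrict (Set.Ioi 0)) := by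
    have hm0 := hPib_int.aestronglyMeasurable
    have hae : ∀ᵐ y ∂(volume.restrict (Set.Ioi (0:ℝ))),
        (fun y => (min 1 y)⁻¹ * (min 1 y * Pib y)) y = Pib y := by
      filter_upwards [ae_restrict_mem measurableSet_Ioi] with y hy
      have h0 : 0 < min 1 y := lt_min one_pos hy
      field_simp
    exact (((measurable_const.min measurable_id).inv.aestronglyMeasurable.mul hm0)).congr hae
  have hmeasT : AEStronglyMeasurable Pib (volume.restrict (Set.Ioc (0:ℝ) T)) :=
    hmeas.mono_measure (Measure.restrict_mono Set.Ioc_subset_Ioi_self le_rfl)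
  set f : ℝ → ℝ := fun y => Real.sin (b * y) * Real.exp (-(b * a * y)) * Pib y with hfdef
  have hfint : IntegrableOn f (Set.Ioi 0) := by
    refine Integrable.mono' (g := fun y => max 1 b * (min 1 y * Pib y))
      (hPib_int.const_mul _) ?_ ?_
    · exact ((Real.continuous_sin.comp (continuous_const.mul continuous_id)).mul
        (Real.continuous_exp.comp (continuous_const.mul continuous_id).neg)).aestronglyMeasurable.mul hmeas
    · filter_upwards [ae_restrict_mem measurableSet_Ioi] with y hy
      have hy0 : (0:ℝ) < y := hy
      have hP : 0 ≤ Pib y := hPib_nonneg y hy0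
      have hsin : |Real.sin (b * y)| ≤ min 1 (b * y) :=
        le_min (abs_le.2 ⟨Real.neg_one_le_sin _, Real.sin_le_one _⟩)
          ((Real.abs_sin_le_abs).trans (le_of_eq (abs_of_pos (by positivity))))
      have hexp : Real.exp (-(b * a * y)) ≤ 1 := Real.exp_le_one_iff.2 (by nlinarith [mul_pos (mul_pos hb ha) hy0])
      calc ‖f y‖ = |Real.sin (b * y)| * Real.exp (-(b * a * y)) * Pib y := by
            rw [hfdef]; simp only [Real.norm_eq_abs, abs_mul]
            rw [abs_of_pos (Real.exp_pos _), abs_of_nonneg hP]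
      _ ≤ (min 1 (b * y)) * 1 * Pib y := by
            apply mul_le_mul_of_nonneg_right _ hP
            exact mul_le_mul hsin hexp (Real.exp_pos _).le (le_trans (abs_nonneg _) hsin)
      _ ≤ (max 1 b * min 1 y) * 1 * Pib y := by
            have := min_bound (b := b) hy0
            nlinarith [hP]
      _ = max 1 b * (min 1 y * Pib y) := by ring
  have hFint : IntegrableOn
      (fun y : ℝ => (1 - Complex.exp (-(z * (y : ℂ)))) * ((Pib y : ℝ) : ℂ)) (Set.Ioi 0) := by
    refine Integrable.mono' (g := fun y => (2 + 2 * ‖z‖) * (min 1 y * Pib y))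
      (hPib_int.const_mul _) ?_ ?_
    · exact ((continuous_const.sub (Complex.continuous_exp.comp
        ((continuous_const.mul Complex.continuous_ofReal).neg))).aestronglyMeasurable).mul
        (Complex.continuous_ofReal.comp_aestronglyMeasurable hmeas)
    · filter_upwards [ae_restrict_mem measurableSet_Ioi] with y hy
      have hy0 : (0:ℝ) < y := hy
      have hP : 0 ≤ Pib y := hPib_nonneg y hy0
      have habs : ‖(1 - Complex.exp (-(z * (y:ℂ)))) * ((Pib y : ℝ) : ℂ)‖
          = ‖1 - Complex.exp (-(z * (y:ℂ)))‖ * Pib y := by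
        rw [norm_mul, Complex.norm_real, Real.norm_eq_abs,
          abs_of_nonneg hP]
      have hzy : ‖z * (y:ℂ)‖ = ‖z‖ * y := by
        rw [norm_mul, Complex.norm_real, Real.norm_eq_abs, abs_of_pos hy0]
      have hrey : (-(z * (y:ℂ))).re = -(b * a * y) := by
        simp [Complex.neg_re, Complex.mul_re, hzre, hzim]
      have key : ‖1 - Complex.exp (-(z * (y:ℂ)))‖ ≤ (2 + 2 * ‖z‖) * min 1 y := by
        have habsz : 0 ≤ ‖z‖ := norm_nonneg z
        rcases le_or_gt (‖z * (y:ℂ)‖) 1 with hc | hc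
        · have h1 : ‖Complex.exp (-(z * (y:ℂ))) - 1‖ ≤ 2 * ‖-(z * (y:ℂ))‖ :=
            Complex.norm_exp_sub_one_le (by rwa [norm_neg])
          have h2 : ‖1 - Complex.exp (-(z * (y:ℂ)))‖
              = ‖Complex.exp (-(z * (y:ℂ))) - 1‖ := by
            rw [show (1 : ℂ) - Complex.exp (-(z * (y:ℂ)))
              = -(Complex.exp (-(z * (y:ℂ))) - 1) from by ring, norm_neg]
          rw [norm_neg, hzy] at h1
          rw [h2]
          rcases le_total y 1 with hy1 | hy1
          · rw [min_eq_right hy1]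
            nlinarith
          · rw [min_eq_left hy1]
            nlinarith
        · have h2 : ‖1 - Complex.exp (-(z * (y:ℂ)))‖ ≤ 2 := by
            calc ‖1 - Complex.exp (-(z * (y:ℂ)))‖
                ≤ ‖(1:ℂ)‖ + ‖Complex.exp (-(z * (y:ℂ)))‖ := by
                  simpa using (norm_sub_le (1 : ℂ) (Complex.exp (-(z * (y:ℂ)))))
            _ ≤ 1 + 1 := by
                  rw [norm_one, Complex.norm_exp, hrey]
                  have : Real.exp (-(b * a * y)) ≤ 1 :=
                    Real.exp_le_one_iff.2 (by nlinarith [mul_pos (mul_pos hb ha) hy0])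
                  linarith
            _ = 2 := by norm_num
          rw [hzy] at hc
          rcases le_total 1 y with hy1 | hy1
          · rw [min_eq_left hy1]; nlinarith
          · rw [min_eq_right hy1]; nlinarith
      rw [habs]
      calc ‖1 - Complex.exp (-(z * (y:ℂ)))‖ * Pib y
          ≤ ((2 + 2 * ‖z‖) * min 1 y) * Pib y := mul_le_mul_of_nonneg_right key hP
      _ = (2 + 2 * ‖z‖) * (min 1 y * Pib y) := by ring
  have hz0 : 0 ≤ z.re := by rw [hzre]; positivity
  have hImInt : (∫ y in Set.Ioi (0:ℝ), (1 - Complex.exp (-(z * (y : ℂ)))) * ((Pib y : ℝ) : ℂ)).im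
      = ∫ y in Set.Ioi (0:ℝ), f y := by
    have h0 : ∫ y in Set.Ioi (0:ℝ),
        ((1 - Complex.exp (-(z * (y : ℂ)))) * ((Pib y : ℝ) : ℂ)).im
        = (∫ y in Set.Ioi (0:ℝ), (1 - Complex.exp (-(z * (y : ℂ)))) * ((Pib y : ℝ) : ℂ)).im := by
      simpa using integral_im (𝕜 := ℂ) hFint
    rw [← h0]
    apply setIntegral_congr_fun measurableSet_Ioi
    intro y hy
    have hrey : (-(z * (y:ℂ))).re = -(b * a * y) := by
      simp [Complex.neg_re, Complex.mul_re, hzre, hzim]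
    have himy : (-(z * (y:ℂ))).im = -(b * y) := by
      simp [Complex.neg_im, Complex.mul_im, hzre, hzim]
    rw [hfdef]
    simp only [Complex.mul_im, Complex.ofReal_im, Complex.ofReal_re, Complex.sub_im,
      Complex.one_im, Complex.exp_im, hrey, himy, Real.sin_neg]
    ring
  have him : (φC z).im = σ2 * b + ∫ y in Set.Ioi (0:ℝ), f y := by
    rw [hrepC z hz0, Complex.add_im, Complex.add_im, hImInt, Complex.ofReal_im,
      Complex.mul_im, Complex.ofReal_re, Complex.ofReal_im, hzim]
    ring
  -- pointwise facts
  have hfT : ∀ y : ℝ, Real.sin (b * (y + T)) = -Real.sin (b * y) := by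
    intro y; rw [mul_add, hbT, Real.sin_add_pi]
  have hEmono : ∀ y : ℝ, 0 < y →
      Real.exp (-(b * a * (y + T))) * Pib (y + T) ≤ Real.exp (-(b * a * y)) * Pib y := by
    intro y hy
    apply mul_le_mul (Real.exp_le_exp.2 (by nlinarith [mul_pos (mul_pos hb ha) hTpos]))
      (hPib_anti y (y + T) hy (by linarith)) (hPib_nonneg _ (by linarith)) (Real.exp_pos _).le
  have hsin_even : ∀ (k : ℕ) (y : ℝ), 2 * (k:ℝ) * T < y → y ≤ 2 * (k:ℝ) * T + T →
      0 ≤ Real.sin (b * y) := by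
    intro k y h1 h2
    have e1 : b * (2 * (k:ℝ) * T) = (k:ℝ) * (2 * Real.pi) := by rw [← hbT]; ring
    have h3 := Real.sin_add_nat_mul_two_pi (b * y - (k:ℝ) * (2 * Real.pi)) k
    rw [show b * y - (k:ℝ) * (2 * Real.pi) + (k:ℝ) * (2 * Real.pi)= b * y from by ring] at h3
    rw [h3]
    apply Real.sin_nonneg_of_nonneg_of_le_pi
    · have := mul_le_mul_of_nonneg_left h1.le hb.le
      rw [e1] at this; linarith
    · have := mul_le_mul_of_nonneg_left h2 hb.le
      rw [mul_add, e1, hbT] at this; linarith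
  have hsin_odd : ∀ (k : ℕ) (y : ℝ), (2 * (k:ℝ) + 1) * T < y → y ≤ (2 * (k:ℝ) + 1) * T + T →
      Real.sin (b * y) ≤ 0 := by
    intro k y h1 h2
    have e1 : b * ((2 * (k:ℝ) + 1) * T + T) = ((k:ℕ) + 1 : ℕ) * (2 * Real.pi) := by
      push_cast; rw [← hbT]; ring
    have h3 := Real.sin_add_nat_mul_two_pi (b * y - ((k:ℕ) + 1 : ℕ) * (2 * Real.pi)) (k + 1)
    rw [show b * y - ((k:ℕ) + 1 : ℕ) * (2 * Real.pi) + ((k:ℕ) + 1 : ℕ) * (2 * Real.pi) = b * y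
      from by ring] at h3
    rw [h3]
    apply Real.sin_nonpos_of_nonpos_of_neg_pi_le
    · have := mul_le_mul_of_nonneg_left h2 hb.le
      rw [e1] at this; linarith
    · have := mul_le_mul_of_nonneg_left h1.le hb.le
      have e2 : b * ((2 * (k:ℝ) + 1) * T) = ((k:ℕ) + 1 : ℕ) * (2 * Real.pi) - Real.pi := by
        push_cast; rw [← hbT]; ring
      rw [e2] at this; linarith
  -- pair inequalities
  have hgpair_even : ∀ c : ℝ, 0 ≤ c → (∀ y ∈ Set.Ioc c (c + T), 0 ≤ Real.sin (b * y)) →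
      0 ≤ (∫ y in Set.Ioc c (c + T), f y) + ∫ y in Set.Ioc (c + T) (c + 2 * T), f y := by
    intro c hc hcsin
    rw [pair_integral hTpos hc hfint]
    apply setIntegral_nonneg measurableSet_Ioc
    intro y hy
    have hy0 : 0 < y := lt_of_le_of_lt hc hy.1
    show 0 ≤ Real.sin (b * y) * Real.exp (-(b * a * y)) * Pib y
      + Real.sin (b * (y + T)) * Real.exp (-(b * a * (y + T))) * Pib (y + T)
    rw [hfT y]
    have h1 := hEmono y hy0
    have h2 := hcsin y hy
    nlinarith
  have hgpair_odd : ∀ c : ℝ, 0 ≤ c → (∀ y ∈ Set.Ioc c (c + T), Real.sin (b * y) ≤ 0) →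
      (∫ y in Set.Ioc c (c + T), f y) + (∫ y in Set.Ioc (c + T) (c + 2 * T), f y) ≤ 0 := by
    intro c hc hcsin
    rw [pair_integral hTpos hc hfint]
    apply setIntegral_nonpos measurableSet_Ioc
    intro y hy
    have hy0 : 0 < y := lt_of_le_of_lt hc hy.1
    show Real.sin (b * y) * Real.exp (-(b * a * y)) * Pib y
      + Real.sin (b * (y + T)) * Real.exp (-(b * a * (y + T))) * Pib (y + T) ≤ 0
    rw [hfT y]
    have h1 := hEmono y hy0
    have h2 := hcsin y hy
    nlinarith
  -- tail signs
  have htail0 : 0 ≤ ∫ y in Set.Ioi (0:ℝ), f y := by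
    refine hasSum_pair_nonneg (hasSum_Ioc_step hTpos hfint) ?_
    intro j
    have e1 : (0:ℝ) + ((2*j : ℕ) : ℝ) * T = 2 * (j:ℝ) * T := by push_cast; ring
    have e2 : (0:ℝ) + (((2*j : ℕ) : ℝ) + 1) * T = 2 * (j:ℝ) * T + T := by push_cast; ring
    have e3 : (0:ℝ) + ((2*j + 1 : ℕ) : ℝ) * T = 2 * (j:ℝ) * T + T := by push_cast; ring
    have e4 : (0:ℝ) + (((2*j + 1 : ℕ) : ℝ) + 1) * T = 2 * (j:ℝ) * T + 2 * T := by push_cast; ring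
    rw [e1, e2, e3, e4]
    exact hgpair_even _ (by positivity) (fun y hy => hsin_even j y hy.1 hy.2)
  have htailT : (∫ y in Set.Ioi T, f y) ≤ 0 := by
    have hint : IntegrableOn f (Set.Ioi T) := hfint.mono_set (Set.Ioi_subset_Ioi hTpos.le)
    have hs := (hasSum_Ioc_step hTpos hint).neg
    have h0 : 0 ≤ -∫ y in Set.Ioi T, f y := by
      refine hasSum_pair_nonneg hs ?_
      intro j
      have e1 : T + ((2*j : ℕ) : ℝ) * T = (2 * (j:ℝ) + 1) * T := by push_cast; ring
      have e2 : T + (((2*j : ℕ) : ℝ) + 1) * T = (2 * (j:ℝ) + 1) * T + T := by push_cast; ring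
      have e3 : T + ((2*j + 1 : ℕ) : ℝ) * T = (2 * (j:ℝ) + 1) * T + T := by push_cast; ring
      have e4 : T + (((2*j + 1 : ℕ) : ℝ) + 1) * T = (2 * (j:ℝ) + 1) * T + 2 * T := by
        push_cast; ring
      rw [e1, e2, e3, e4]
      have := hgpair_odd ((2 * (j:ℝ) + 1) * T) (by positivity)
        (fun y hy => hsin_odd j y hy.1 hy.2)
      linarith
    linarith
  have htail2T : 0 ≤ ∫ y in Set.Ioi (2 * T), f y := by
    have hint : IntegrableOn f (Set.Ioi (2 * T)) :=
      hfint.mono_set (Set.Ioi_subset_Ioi (by linarith))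
    refine hasSum_pair_nonneg (hasSum_Ioc_step hTpos hint) ?_
    intro j
    have e1 : 2 * T + ((2*j : ℕ) : ℝ) * T = 2 * ((j:ℝ) + 1) * T := by push_cast; ring
    have e2 : 2 * T + (((2*j : ℕ) : ℝ) + 1) * T = 2 * ((j:ℝ) + 1) * T + T := by push_cast; ring
    have e3 : 2 * T + ((2*j + 1 : ℕ) : ℝ) * T = 2 * ((j:ℝ) + 1) * T + T := by push_cast; ring
    have e4 : 2 * T + (((2*j + 1 : ℕ) : ℝ) + 1) * T = 2 * ((j:ℝ) + 1) * T + 2 * T := by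
      push_cast; ring
    rw [e1, e2, e3, e4]
    refine hgpair_even _ (by positivity) ?_
    intro y hy
    have h1 : 2 * ((j + 1 : ℕ) : ℝ) * T < y := by push_cast; push_cast at hy; linarith [hy.1]
    have h2 : y ≤ 2 * ((j + 1 : ℕ) : ℝ) * T + T := by push_cast; push_cast at hy; linarith [hy.2]
    exact hsin_even (j + 1) y h1 h2
  -- splittings
  have hintIocT : IntegrableOn f (Set.Ioc 0 T) := hfint.mono_set Set.Ioc_subset_Ioi_self
  have hintIocT2 : IntegrableOn f (Set.Ioc T (2 * T)) :=
    hfint.mono_set (fun x hx => Set.mem_Ioi.2 (hTpos.trans hx.1))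
  have hintIoiT : IntegrableOn f (Set.Ioi T) := hfint.mono_set (Set.Ioi_subset_Ioi hTpos.le)
  have hintIoi2T : IntegrableOn f (Set.Ioi (2 * T)) :=
    hfint.mono_set (Set.Ioi_subset_Ioi (by linarith))
  have hsplit1 : ∫ y in Set.Ioi (0:ℝ), f y
      = (∫ y in Set.Ioc (0:ℝ) T, f y) + ∫ y in Set.Ioi T, f y := by
    rw [← Set.Ioc_union_Ioi_eq_Ioi hTpos.le,
      setIntegral_union Set.Ioc_disjoint_Ioi_same measurableSet_Ioi hintIocT hintIoiT]
  have hsplit2 : ∫ y in Set.Ioi T, f y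
      = (∫ y in Set.Ioc T (2 * T), f y) + ∫ y in Set.Ioi (2 * T), f y := by
    rw [← Set.Ioc_union_Ioi_eq_Ioi (by linarith : T ≤ 2 * T),
      setIntegral_union Set.Ioc_disjoint_Ioi_same measurableSet_Ioi hintIocT2 hintIoi2T]
  have hp0 : (∫ y in Set.Ioc (0:ℝ) T, f y) + (∫ y in Set.Ioc T (2 * T), f y)
      = ∫ y in Set.Ioc (0:ℝ) T, (f y + f (y + T)) := by
    have := pair_integral (c := 0) hTpos le_rfl hfint
    simpa using this
  -- integrability on the first period
  have hint_sinPib : IntegrableOn (fun y => Real.sin (b * y) * Pib y) (Set.Ioc 0 T) := by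
    refine Integrable.mono' (g := fun y => max 1 b * (min 1 y * Pib y))
      (((hPib_int.mono_set Set.Ioc_subset_Ioi_self)).const_mul _) ?_ ?_
    · exact ((Real.continuous_sin.comp
        (continuous_const.mul continuous_id)).aestronglyMeasurable).mul hmeasT
    · filter_upwards [ae_restrict_mem measurableSet_Ioc] with y hy
      have hy0 : 0 < y := hy.1
      have hP : 0 ≤ Pib y := hPib_nonneg y hy0
      have hsin : |Real.sin (b * y)| ≤ min 1 (b * y) :=
        le_min (abs_le.2 ⟨Real.neg_one_le_sin _, Real.sin_le_one _⟩)
          ((Real.abs_sin_le_abs).trans (le_of_eq (abs_of_pos (by positivity))))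
      calc ‖Real.sin (b * y) * Pib y‖ = |Real.sin (b * y)| * Pib y := by
            rw [norm_mul, Real.norm_eq_abs, Real.norm_eq_abs, abs_of_nonneg hP]
      _ ≤ (max 1 b * min 1 y) * Pib y :=
            mul_le_mul_of_nonneg_right (hsin.trans (min_bound hy0)) hP
      _ = max 1 b * (min 1 y * Pib y) := by ring
  have hint_yPib : IntegrableOn (fun y => y * Pib y) (Set.Ioc 0 T) := by
    refine Integrable.mono' (g := fun y => max 1 T * (min 1 y * Pib y))
      (((hPib_int.mono_set Set.Ioc_subset_Ioi_self)).const_mul _) ?_ ?_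
    · exact measurable_id.aestronglyMeasurable.mul hmeasT
    · filter_upwards [ae_restrict_mem measurableSet_Ioc] with y hy
      have hy0 : 0 < y := hy.1
      have hP : 0 ≤ Pib y := hPib_nonneg y hy0
      have hkey : y ≤ max 1 T * min 1 y := by
        rcases le_total y 1 with h | h
        · rw [min_eq_right h]
          calc y = 1 * y := (one_mul y).symm
          _ ≤ max 1 T * y := mul_le_mul_of_nonneg_right (le_max_left _ _) hy0.le
        · rw [min_eq_left h, mul_one]; exact hy.2.trans (le_max_right _ _)
      calc ‖y * Pib y‖ = y * Pib y := by
            rw [norm_mul, Real.norm_eq_abs, Real.norm_eq_abs, abs_of_pos hy0, abs_of_nonneg hP]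
      _ ≤ (max 1 T * min 1 y) * Pib y := mul_le_mul_of_nonneg_right hkey hP
      _ = max 1 T * (min 1 y * Pib y) := by ring
  have hshift : IntegrableOn (fun y => f (y + T)) (Set.Ioc 0 T) := by
    have h2i : IntervalIntegrable f volume T (2 * T) :=
      (intervalIntegrable_iff_integrableOn_Ioc_of_le (by linarith)).2 hintIocT2
    have h3i := h2i.comp_add_right T
    rw [show T - T = 0 from by ring, show 2 * T - T = T from by ring] at h3i
    exact (intervalIntegrable_iff_integrableOn_Ioc_of_le hTpos.le).1 h3i
  have hintpair : IntegrableOn (fun y => f y + f (y + T)) (Set.Ioc 0 T) := hintIocT.add hshift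
  -- lower pointwise bound on the first period
  have hlowptwise : ∀ y ∈ Set.Ioc (0:ℝ) T,
      (Real.exp (-(Real.pi * a)) - Real.exp (-(2 * Real.pi * a)))
        * (Real.sin (b * y) * Pib y) ≤ f y + f (y + T) := by
    intro y hy
    have hy0 : 0 < y := hy.1
    have hsin : 0 ≤ Real.sin (b * y) := by
      apply Real.sin_nonneg_of_nonneg_of_le_pi (by positivity)
      rw [← hbT]
      nlinarith [hy.2]
    have hP : 0 ≤ Pib y := hPib_nonneg y hy0
    have hPT : 0 ≤ Pib (y + T) := hPib_nonneg _ (by linarith)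
    have hanti : Pib (y + T) ≤ Pib y := hPib_anti y (y + T) hy0 (by linarith)
    have he2 : Real.exp (-(b * a * (y + T))) = Real.exp (-(b * a * y)) * Real.exp (-(Real.pi * a)) := by
      rw [← Real.exp_add]
      congr 1
      have : b * a * T = Real.pi * a := by rw [← hbT]; ring
      nlinarith [this]
    have he3 : Real.exp (-(2 * Real.pi * a)) = Real.exp (-(Real.pi * a)) * Real.exp (-(Real.pi * a)) := by
      rw [← Real.exp_add]; congr 1; ring
    have hee : Real.exp (-(Real.pi * a)) ≤ Real.exp (-(b * a * y)) := by
      apply Real.exp_le_exp.2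
      have : b * a * y ≤ Real.pi * a := by rw [← hbT]; nlinarith [hy.2]
      linarith
    have hepile : Real.exp (-(Real.pi * a)) ≤ 1 :=
      Real.exp_le_one_iff.2 (by nlinarith [Real.pi_pos])
    show (Real.exp (-(Real.pi * a)) - Real.exp (-(2 * Real.pi * a)))
        * (Real.sin (b * y) * Pib y)
      ≤ Real.sin (b * y) * Real.exp (-(b * a * y)) * Pib y
        + Real.sin (b * (y + T)) * Real.exp (-(b * a * (y + T))) * Pib (y + T)
    rw [hfT y, he2, he3]
    nlinarith [mul_nonneg (mul_nonneg (mul_nonneg hsin (Real.exp_pos (-(b * a * y))).le)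
        (Real.exp_pos (-(Real.pi * a))).le) (sub_nonneg.2 hanti),
      mul_nonneg (mul_nonneg hsin hP)
        (mul_nonneg (sub_nonneg.2 hee) (sub_nonneg.2 hepile))]
  -- upper pointwise bound on the first period
  have huppptwise : ∀ y ∈ Set.Ioc (0:ℝ) T, f y ≤ b * (y * Pib y) := by
    intro y hy
    have hy0 : 0 < y := hy.1
    have hsin : 0 ≤ Real.sin (b * y) := by
      apply Real.sin_nonneg_of_nonneg_of_le_pi (by positivity)
      rw [← hbT]
      nlinarith [hy.2]
    have hP : 0 ≤ Pib y := hPib_nonneg y hy0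
    have hsinle : Real.sin (b * y) ≤ b * y := (Real.sin_lt (by positivity)).le
    have hexple : Real.exp (-(b * a * y)) ≤ 1 :=
      Real.exp_le_one_iff.2 (by nlinarith [mul_pos (mul_pos hb ha) hy0])
    show Real.sin (b * y) * Real.exp (-(b * a * y)) * Pib y ≤ b * (y * Pib y)
    nlinarith [mul_nonneg (sub_nonneg.2 hsinle) hP,
      mul_nonneg (mul_nonneg hsin (sub_nonneg.2 hexple)) hP]
  -- final bounds
  have hlowint : (Real.exp (-(Real.pi * a)) - Real.exp (-(2 * Real.pi * a)))
      * (∫ y in Set.Ioc (0:ℝ) T, Real.sin (b * y) * Pib y)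
      ≤ ∫ y in Set.Ioc (0:ℝ) T, (f y + f (y + T)) := by
    rw [← MeasureTheory.integral_const_mul]
    exact setIntegral_mono_on (hint_sinPib.const_mul _) hintpair measurableSet_Ioc hlowptwise
  have huppint : (∫ y in Set.Ioc (0:ℝ) T, f y)
      ≤ b * ∫ y in Set.Ioc (0:ℝ) T, y * Pib y := by
    rw [← MeasureTheory.integral_const_mul]
    exact setIntegral_mono_on hintIocT (hint_yPib.const_mul _) measurableSet_Ioc huppptwise
  refine ⟨him, ?_, ?_, ?_⟩
  · rw [him]
    exact add_nonneg (mul_nonneg hσ hb.le) htail0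
  · rw [him]
    refine add_le_add le_rfl ?_
    linarith [hlowint, htail2T, hsplit1, hsplit2, hp0]
  · rw [him]
    refine add_le_add le_rfl ?_
    linarith [hsplit1, htailT, huppint]
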